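/- Let P be an irreducible stochastic matrix with stationary distribution π and fundamental matrix Z. For any matrix-valued perturbation direction Q with Q1 = 0 (a feasible tangent direction of the stochastic simplex), the directional derivative of the stationary distribution π(P) in direction Q equals πQZ. That is, if P(t) = P + tQ remains an irreducible stochastic matrix for small t with stationary distribution π(t), then dπ(t)/dt at t=0 equals πQZ. -/

import Mathlib

open BigOperators Matrix

/-- For a feasible perturbation direction `Q` (with `Q1 = 0`), if
`π(t)` is the stationary distribution of `P + tQ` for small `t`, smooth at `t = 0` with
`π(0) = π`, then the derivative of `π(t)` at `t = 0` equals `π Q Z`. -/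
theorem stmt_16 {n : ℕ} (P Z Q : Matrix (Fin n) (Fin n) ℝ) (pv : Fin n → ℝ)
    (hP0 : ∀ i j, 0 ≤ P i j) (hProw : ∀ i, ∑ j, P i j = 1)
    (hirr : ∀ i j, ∃ k : ℕ, 0 < (P ^ k) i j)
    (hpiP : Matrix.vecMul pv P = pv) (hpi1 : ∑ i, pv i = 1) (hpipos : ∀ i, 0 < pv i)
    (hZl : (1 - P + Matrix.of (fun _ j => pv j)) * Z = 1)
    (hZr : Z * (1 - P + Matrix.of (fun _ j => pv j)) = 1)
    (hQ : Q.mulVec (fun _ => (1 : ℝ)) = 0)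
    (ε : ℝ) (hε : 0 < ε)
    (πt : ℝ → Fin n → ℝ)
    (hstat : ∀ t : ℝ, |t| < ε → Matrix.vecMul (πt t) (P + t • Q) = πt t)
    (hnorm : ∀ t : ℝ, |t| < ε → ∑ i, πt t i = 1)
    (hzero : πt 0 = pv)
    (d : Fin n → ℝ)
    (hderiv : ∀ i, HasDerivAt (fun t => πt t i) (d i) 0) :
    d = Matrix.vecMul (Matrix.vecMul pv Q) Z := by
  have hball : ∀ᶠ t : ℝ in nhds 0, |t| < ε := by
    have := Metric.ball_mem_nhds (0 : ℝ) hε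
    filter_upwards [this] with t ht
    simpa [Real.dist_eq] using ht
  -- sum of derivatives is 0
  have hsum0 : ∑ i, d i = 0 := by
    have h1 : HasDerivAt (fun t => ∑ i, πt t i) (∑ i, d i) 0 :=
      HasDerivAt.fun_sum fun i _ => hderiv i
    have h2 : (fun t => ∑ i, πt t i) =ᶠ[nhds 0] fun _ => (1 : ℝ) := by
      filter_upwards [hball] with t ht using hnorm t ht
    have h3 : HasDerivAt (fun _ : ℝ => (1 : ℝ)) (∑ i, d i) 0 :=
      (h2.hasDerivAt_iff).mp h1
    have h4 : HasDerivAt (fun _ : ℝ => (1 : ℝ)) 0 0 := hasDerivAt_const 0 1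
    exact h3.unique h4
  -- key equation from differentiating the stationarity equation
  have hkey : ∀ j, d j = (∑ i, d i * P i j) + ∑ i, pv i * Q i j := by
    intro j
    have hg : HasDerivAt
        (fun t => (∑ i, πt t i * P i j) + t * ∑ i, πt t i * Q i j)
        ((∑ i, d i * P i j) + (1 * ∑ i, pv i * Q i j + 0 * ∑ i, d i * Q i j)) 0 := by
      have hA : HasDerivAt (fun t => ∑ i, πt t i * P i j) (∑ i, d i * P i j) 0 :=
        HasDerivAt.fun_sum fun i _ => (hderiv i).mul_const (P i j)
      have hB : HasDerivAt (fun t => ∑ i, πt t i * Q i j) (∑ i, d i * Q i j) 0 :=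
        HasDerivAt.fun_sum fun i _ => (hderiv i).mul_const (Q i j)
      have hB' : (∑ i, πt 0 i * Q i j) = ∑ i, pv i * Q i j := by rw [hzero]
      have := (hasDerivAt_id (0 : ℝ)).fun_mul hB
      simpa [hB'] using hA.fun_add this
    have heq : (fun t => (∑ i, πt t i * P i j) + t * ∑ i, πt t i * Q i j)
        =ᶠ[nhds 0] fun t => πt t j := by
      filter_upwards [hball] with t ht
      have := congrFun (hstat t ht) j
      simp only [Matrix.vecMul, dotProduct, Matrix.add_apply, Matrix.smul_apply,
        smul_eq_mul] at this
      rw [← this]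
      rw [Finset.mul_sum]
      rw [← Finset.sum_add_distrib]
      congr 1; ext i; ring
    have hg' : HasDerivAt (fun t => πt t j)
        ((∑ i, d i * P i j) + (1 * ∑ i, pv i * Q i j + 0 * ∑ i, d i * Q i j)) 0 :=
      (heq.hasDerivAt_iff).mp hg
    have := hg'.unique (hderiv j)
    rw [← this]; ring
  -- algebraic conclusion
  have hA : Matrix.vecMul d (1 - P + Matrix.of (fun _ j => pv j)) = Matrix.vecMul pv Q := by
    funext j
    simp only [Matrix.vecMul, dotProduct, Matrix.add_apply, Matrix.sub_apply,
      Matrix.of_apply, Matrix.one_apply]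
    have expand : (∑ i, d i * ((if i = j then (1:ℝ) else 0) - P i j + pv j))
        = d j - (∑ i, d i * P i j) + (∑ i, d i) * pv j := by
      simp only [mul_sub, mul_add, Finset.sum_add_distrib, Finset.sum_sub_distrib,
        mul_ite, mul_one, mul_zero, Finset.sum_ite_eq', Finset.mem_univ, if_true,
        ← Finset.sum_mul]
    rw [expand, hsum0, hkey j]
    ring
  calc d = Matrix.vecMul d 1 := (Matrix.vecMul_one d).symm
    _ = Matrix.vecMul d ((1 - P + Matrix.of (fun _ j => pv j)) * Z) := by rw [hZl]
    _ = Matrix.vecMul (Matrix.vecMul d (1 - P + Matrix.of (fun _ j => pv j))) Z := by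
        rw [Matrix.vecMul_vecMul]
    _ = Matrix.vecMul (Matrix.vecMul pv Q) Z := by rw [hA]
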